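/- Let A be a finite nonempty alphabet, let s₁ be a strategy of Player 1 on the full tree over A, and let C be a finite set of finite sequences over A. Define Z_{s₁}(C) to be the set of positions p = ⟨a₁, c₁, a₂, c₂, …, a_n, c_n⟩ such that ⟨c₁, …, c_n⟩ ∈ C and, for each 1 ≤ i ≤ n, a_i = s₁(⟨a₁, c₁, …, a_{i−1}, c_{i−1}⟩) (the actions prescribed to Player 1 by s₁). Then C is a maximal prefix code over A if and only if both of the following hold: (1) ∑_{p ∈ Z_{s₁}(C)} (1/|A|)^{⌊len(p)/2⌋} = 1, and (2) s₁ is a winning strategy for Player 1 for Z_{s₁}(C). -/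

import Mathlib

open scoped ENNReal

variable {A : Type*}

/-- A position `p` is a prefix of the play `x`. -/
def PrefixOfPlay (p : List A) (x : ℕ → A) : Prop :=
  List.ofFn (fun i : Fin p.length => x i) = p

/-- The play `x` is consistent with the Player 1 strategy `s₁`. -/
def Consistent1 (s₁ : List A → A) (x : ℕ → A) : Prop :=
  ∀ n : ℕ, x (2 * n) = s₁ (List.ofFn (fun i : Fin (2 * n) => x i))

/-- The play `x` is consistent with the Player 2 strategy `s₂`. -/
def Consistent2 (s₂ : List A → A) (x : ℕ → A) : Prop :=
  ∀ n : ℕ, x (2 * n + 1) = s₂ (List.ofFn (fun i : Fin (2 * n + 1) => x i))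

/-- Player 1 has a winning strategy for the open set determined by `Z`. -/
def P1Wins (Z : Set (List A)) : Prop :=
  ∃ s₁ : List A → A, ∀ x : ℕ → A, Consistent1 s₁ x → ∃ p ∈ Z, PrefixOfPlay p x

/-- Player 2 has a winning strategy for the open set determined by `Z`. -/
def P2Wins (Z : Set (List A)) : Prop :=
  ∃ s₂ : List A → A, ∀ x : ℕ → A, Consistent2 s₂ x → ¬ ∃ p ∈ Z, PrefixOfPlay p x

/-- A prefix code: no element is a (proper) prefix of another element. -/
def IsPrefixCode (C : Set (List A)) : Prop :=
  ∀ p ∈ C, ∀ q ∈ C, p <+: q → p = q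

/-- A maximal prefix code: a prefix code not strictly contained in any prefix code. -/
def IsMaximalPrefixCode (C : Set (List A)) : Prop :=
  IsPrefixCode C ∧ ∀ D : Set (List A), IsPrefixCode D → C ⊆ D → D = C

/-- `interleave s₁ pref ⟨c₁,…,c_n⟩` is the position `⟨a₁,c₁,…,a_n,c_n⟩` in which each
`aᵢ` is the move prescribed by the strategy `s₁` (after the already-played `pref`). -/
def interleave (s₁ : List A → A) : List A → List A → List A
  | _, [] => []
  | pref, c :: cs => s₁ pref :: c :: interleave s₁ (pref ++ [s₁ pref, c]) cs

set_option linter.unusedSectionVars false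

theorem interleave_length (s₁ : List A → A) : ∀ pref c, (interleave s₁ pref c).length = 2 * c.length
  | _, [] => by simp [interleave]
  | pref, c :: cs => by
    simp [interleave, interleave_length s₁ _ cs]; ring

theorem interleave_injOn (s₁ : List A → A) :
    ∀ (c c' pref : List A), interleave s₁ pref c = interleave s₁ pref c' → c = c'
  | [], [], _, _ => rfl
  | [], _ :: _, _, h => by simp [interleave] at h
  | _ :: _, [], _, h => by simp [interleave] at h
  | a :: as, b :: bs, pref, h => by
    simp only [interleave, List.cons.injEq] at h
    obtain ⟨-, rfl, h⟩ := h
    exact congrArg _ (interleave_injOn s₁ as bs _ h)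

theorem interleave_append (s₁ : List A → A) :
    ∀ (cs pref : List A) (c : A), interleave s₁ pref (cs ++ [c]) =
      interleave s₁ pref cs ++ [s₁ (pref ++ interleave s₁ pref cs), c]
  | [], pref, c => by simp [interleave]
  | c' :: cs, pref, c => by
    show interleave s₁ pref ((c' :: cs) ++ [c]) = _
    rw [List.cons_append]
    show s₁ pref :: c' :: interleave s₁ (pref ++ [s₁ pref, c']) (cs ++ [c]) = _
    rw [interleave_append s₁ cs _ c]
    simp [interleave, List.append_assoc]

/-- The first `n` moves of the canonical play in which Player 1 follows `s₁` and
Player 2 plays `y 0, y 1, …`. -/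
def playList (s₁ : List A → A) (y : ℕ → A) : ℕ → List A
  | 0 => []
  | n + 1 => playList s₁ y n ++
      [if n % 2 = 0 then s₁ (playList s₁ y n) else y (n / 2)]

theorem playList_length (s₁ : List A → A) (y : ℕ → A) : ∀ n, (playList s₁ y n).length = n
  | 0 => rfl
  | n + 1 => by simp [playList, playList_length s₁ y n]

theorem ofFn_snoc (x : ℕ → A) (n : ℕ) :
    List.ofFn (fun i : Fin (n + 1) => x i) = List.ofFn (fun i : Fin n => x i) ++ [x n] := by
  rw [List.ofFn_succ', List.concat_eq_append]
  simp

theorem ofFn_eq_playList (s₁ : List A → A) (x : ℕ → A) (hx : Consistent1 s₁ x) :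
    ∀ n, List.ofFn (fun i : Fin n => x i) = playList s₁ (fun k => x (2 * k + 1)) n
  | 0 => rfl
  | n + 1 => by
    rw [ofFn_snoc, ofFn_eq_playList s₁ x hx n]
    show _ ++ [x n] = _ ++ _
    congr 1
    rcases Nat.even_or_odd n with ⟨m, hm⟩ | ⟨m, hm⟩
    · subst hm
      rw [show m + m = 2 * m by ring, hx m, ofFn_eq_playList s₁ x hx (2 * m)]
      simp
    · subst hm
      have h1 : (2 * m + 1) % 2 = 1 := by omega
      have h2 : (2 * m + 1) / 2 = m := by omega
      simp [h1, h2]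

theorem playList_even (s₁ : List A → A) (y : ℕ → A) :
    ∀ n, playList s₁ y (2 * n) = interleave s₁ [] (List.ofFn fun i : Fin n => y i)
  | 0 => rfl
  | n + 1 => by
    have h1 : 2 * (n + 1) = (2 * n + 1) + 1 := by ring
    rw [h1]
    show (playList s₁ y (2 * n) ++ _) ++ _ = _
    have e1 : (2 * n) % 2 = 0 := by omega
    have e2 : (2 * n + 1) % 2 = 1 := by omega
    have e3 : (2 * n + 1) / 2 = n := by omega
    rw [ofFn_snoc, interleave_append]
    simp [e1, e2, e3, playList_even s₁ y n]

noncomputable def canonPlay (s₁ : List A → A) (y : ℕ → A) [Nonempty A] : ℕ → A :=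
  fun n => (playList s₁ y (n + 1)).getD n (Classical.arbitrary A)

theorem ofFn_canonPlay (s₁ : List A → A) (y : ℕ → A) [Nonempty A] :
    ∀ n, List.ofFn (fun i : Fin n => canonPlay s₁ y i) = playList s₁ y n
  | 0 => rfl
  | n + 1 => by
    rw [ofFn_snoc, ofFn_canonPlay s₁ y n]
    show _ ++ [(playList s₁ y (n + 1)).getD n _] = playList s₁ y (n + 1)
    show _ = playList s₁ y n ++ _
    congr 1
    have hl : (playList s₁ y n).length = n := playList_length s₁ y n
    show [List.getD (playList s₁ y n ++ _) n _] = _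
    rw [List.getD_eq_getElem _ _ (by simp [hl])]
    congr 1
    rw [List.getElem_append_right (by omega)]
    simp [hl]

theorem canonPlay_consistent (s₁ : List A → A) (y : ℕ → A) [Nonempty A] :
    Consistent1 s₁ (canonPlay s₁ y) := by
  intro n
  rw [ofFn_canonPlay]
  show (playList s₁ y (2 * n) ++ [if (2 * n) % 2 = 0 then _ else _]).getD (2 * n) _ = _
  have hl : (playList s₁ y (2 * n)).length = 2 * n := playList_length s₁ y (2 * n)
  rw [List.getD_eq_getElem _ _ (by simp [hl])]
  rw [List.getElem_append_right (by omega)]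
  simp [hl, Nat.mul_mod_right]

theorem canonPlay_odd (s₁ : List A → A) (y : ℕ → A) [Nonempty A] (k : ℕ) :
    canonPlay s₁ y (2 * k + 1) = y k := by
  show (playList s₁ y (2 * k + 1) ++ [if (2 * k + 1) % 2 = 0 then _ else _]).getD (2 * k + 1) _ = _
  have hl : (playList s₁ y (2 * k + 1)).length = 2 * k + 1 := playList_length s₁ y _
  rw [List.getD_eq_getElem _ _ (by simp [hl])]
  rw [List.getElem_append_right (by omega)]
  have h1 : (2 * k + 1) % 2 = 1 := by omega
  have h2 : (2 * k + 1) / 2 = k := by omega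
  simp [hl, h1, h2]

theorem ofFn_congr (x : ℕ → A) {m n : ℕ} (h : m = n) :
    List.ofFn (fun i : Fin m => x i) = List.ofFn (fun i : Fin n => x i) := by subst h; rfl

/-- `s₁` wins for `Z_{s₁}(C)` iff `C` is a barrier: every sequence has a prefix in `C`. -/
theorem winning_iff_barrier [Nonempty A] [DecidableEq A] (s₁ : List A → A) (C : Finset (List A)) :
    (∀ x : ℕ → A, Consistent1 s₁ x →
        ∃ p ∈ (↑(C.image fun c => interleave s₁ [] c) : Set (List A)), PrefixOfPlay p x) ↔
      (∀ y : ℕ → A, ∃ c ∈ C, PrefixOfPlay c y) := by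
  constructor
  · intro hw y
    obtain ⟨p, hp, hpre⟩ := hw (canonPlay s₁ y) (canonPlay_consistent s₁ y)
    rw [Finset.coe_image] at hp
    obtain ⟨c, hc, rfl⟩ := hp
    refine ⟨c, hc, ?_⟩
    unfold PrefixOfPlay at hpre ⊢
    rw [ofFn_congr _ (interleave_length s₁ [] c)] at hpre
    have hy : (fun k => canonPlay s₁ y (2 * k + 1)) = y := funext fun k => canonPlay_odd s₁ y k
    rw [ofFn_eq_playList s₁ _ (canonPlay_consistent s₁ y), hy, playList_even] at hpre
    have := interleave_injOn s₁ _ c [] hpre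
    rw [← this]
    exact ofFn_congr y (by rw [this])
  · intro hb x hx
    obtain ⟨c, hc, hcy⟩ := hb (fun k => x (2 * k + 1))
    refine ⟨interleave s₁ [] c, by simp [Finset.coe_image]; exact ⟨c, hc, rfl⟩, ?_⟩
    unfold PrefixOfPlay at hcy ⊢
    rw [ofFn_congr _ (interleave_length s₁ [] c), ofFn_eq_playList s₁ x hx, playList_even, hcy]

section Counting
variable [Fintype A] [DecidableEq A]

def extN (N : ℕ) (c : List A) : Finset (List A) :=
  Finset.univ.image (fun w : Fin (N - c.length) → A => c ++ List.ofFn w)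

def allN (N : ℕ) : Finset (List A) :=
  Finset.univ.image (fun w : Fin N → A => List.ofFn w)

theorem card_extN (N : ℕ) (c : List A) :
    (extN N c).card = Fintype.card A ^ (N - c.length) := by
  rw [extN, Finset.card_image_of_injective _ (fun w w' h => by
    rw [List.append_cancel_left_eq, List.ofFn_inj] at h; exact h)]
  simp [Fintype.card_fun]

theorem card_allN (N : ℕ) : (allN (A := A) N).card = Fintype.card A ^ N := by
  rw [allN, Finset.card_image_of_injective _ (fun w w' h => List.ofFn_inj.1 h)]
  simp [Fintype.card_fun]

theorem mem_allN {N : ℕ} {l : List A} : l ∈ allN N ↔ l.length = N := by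
  constructor
  · rintro hl
    rw [allN, Finset.mem_image] at hl
    obtain ⟨w, -, rfl⟩ := hl
    simp
  · intro hl
    rw [allN, Finset.mem_image]
    refine ⟨fun i : Fin N => l[(i : ℕ)]'(by omega), Finset.mem_univ _, ?_⟩
    exact List.ext_getElem (by simp [hl]) (by intro i h1 h2; simp)

theorem mem_extN {N : ℕ} {c l : List A} (h : c.length ≤ N) :
    l ∈ extN N c ↔ l.length = N ∧ c <+: l := by
  constructor
  · rintro hl
    rw [extN, Finset.mem_image] at hl
    obtain ⟨w, -, rfl⟩ := hl
    constructor
    · simp; omega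
    · exact ⟨List.ofFn w, rfl⟩
  · rintro ⟨hlen, t, rfl⟩
    rw [extN, Finset.mem_image]
    have ht : t.length = N - c.length := by simp at hlen; omega
    refine ⟨fun i : Fin (N - c.length) => t[(i : ℕ)]'(by omega), Finset.mem_univ _, ?_⟩
    congr 1
    exact List.ext_getElem (by simp [ht]) (by intro i h1 h2; simp)

end Counting

/-- If `c` is a prefix of an initial segment of `y`, then `c` is a "prefix" of `y`. -/
theorem prefixOfPlay_of_prefix_ofFn {c : List A} {y : ℕ → A} {N : ℕ}
    (h : c <+: List.ofFn (fun i : Fin N => y i)) : PrefixOfPlay c y := by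
  have hlen : c.length ≤ N := by have := h.length_le; simpa using this
  refine List.ext_getElem (by simp) ?_
  intro i h1 h2
  have hce := h.getElem h2
  simp only [List.getElem_ofFn] at hce ⊢
  exact hce.symm

theorem prefix_trans_getElem {c l : List A} {y : ℕ → A}
    (hc : PrefixOfPlay c y) (hi : ∀ (i : ℕ) (h : i < l.length), l[i] = y i)
    (hlen : c.length ≤ l.length) : c <+: l := by
  rw [List.prefix_iff_eq_take]
  refine List.ext_getElem (by simp; omega) ?_
  intro i h1 h2
  have hci := List.getElem_of_eq hc.symm h1
  simp only [List.getElem_ofFn] at hci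
  rw [List.getElem_take, hi i (by omega), hci]

/-- From the infinite barrier property, every long enough finite word has a prefix in `C`. -/
theorem barrierN_of_barrier [Nonempty A] {C : Finset (List A)}
    (hb : ∀ y : ℕ → A, ∃ c ∈ C, PrefixOfPlay c y) (l : List A)
    (hl : ∀ c ∈ C, c.length ≤ l.length) : ∃ c ∈ C, c <+: l := by
  obtain ⟨c, hc, hcy⟩ := hb (fun k => l.getD k (Classical.arbitrary A))
  exact ⟨c, hc, prefix_trans_getElem hcy
    (fun i h => (List.getD_eq_getElem l _ h).symm) (hl c hc)⟩

/-- A maximal prefix code is a barrier. -/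
theorem barrier_of_maximal [Nonempty A] {C : Finset (List A)}
    (hm : IsMaximalPrefixCode (↑C : Set (List A))) (y : ℕ → A) :
    ∃ c ∈ C, PrefixOfPlay c y := by
  by_contra hno
  push_neg at hno
  set N := C.sup List.length + 1 with hN
  set d : List A := List.ofFn (fun i : Fin N => y i) with hd
  have hdlen : d.length = N := by simp [hd, hN]
  have hdC : ∀ c ∈ C, c.length < N := fun c hc =>
    Nat.lt_succ_of_le (Finset.le_sup (f := List.length) hc)
  have hD : IsPrefixCode (↑C ∪ {d} : Set (List A)) := by
    rintro p (hp | rfl) q (hq | rfl) hpq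
    · exact hm.1 p hp q hq hpq
    · exact absurd (prefixOfPlay_of_prefix_ofFn hpq) (hno p hp)
    · have := hpq.length_le
      rw [hdlen] at this
      exact absurd this (by exact Nat.not_le.2 (hdC q hq))
    · rfl
  have := hm.2 _ hD Set.subset_union_left
  have hdmem : d ∈ C := by
    rw [← Finset.mem_coe, ← this]
    exact Or.inr rfl
  exact hno d hdmem (prefixOfPlay_of_prefix_ofFn (List.prefix_refl d))

/-- A barrier that is a prefix code is maximal. -/
theorem maximal_of_prefixCode_barrier [Nonempty A] {C : Finset (List A)}
    (hpc : IsPrefixCode (↑C : Set (List A)))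
    (hb : ∀ y : ℕ → A, ∃ c ∈ C, PrefixOfPlay c y) :
    IsMaximalPrefixCode (↑C : Set (List A)) := by
  refine ⟨hpc, fun D hD hCD => ?_⟩
  refine Set.Subset.antisymm (fun d hd => ?_) hCD
  obtain ⟨c, hc, hcy⟩ := hb (fun k => d.getD k (Classical.arbitrary A))
  have hdy : PrefixOfPlay d (fun k => d.getD k (Classical.arbitrary A)) := by
    refine List.ext_getElem (by simp) ?_
    intro i h1 h2
    simp only [List.getElem_ofFn]
    exact List.getD_eq_getElem d _ h2
  have hcomp : c <+: d ∨ d <+: c := by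
    rcases le_or_gt c.length d.length with h | h
    · exact Or.inl (prefix_trans_getElem hcy
        (fun i hi => (List.getD_eq_getElem d _ hi).symm) h)
    · refine Or.inr (prefix_trans_getElem hdy ?_ (le_of_lt h))
      intro i hi
      have hci := List.getElem_of_eq hcy.symm hi
      simp only [List.getElem_ofFn] at hci
      exact hci
  rcases hcomp with h | h
  · rw [← hD c (hCD hc) d hd h]; exact hc
  · rw [hD d hd c (hCD hc) h]; exact hc

section Kraft
variable [Fintype A] [DecidableEq A]

theorem natsum_eq {C : Finset (List A)} {N : ℕ}
    (hpc : IsPrefixCode (↑C : Set (List A))) (hN : ∀ c ∈ C, c.length ≤ N)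
    (hbN : ∀ l : List A, l.length = N → ∃ c ∈ C, c <+: l) :
    ∑ c ∈ C, Fintype.card A ^ (N - c.length) = Fintype.card A ^ N := by
  have hdisj : ∀ c ∈ C, ∀ c' ∈ C, c ≠ c' → Disjoint (extN N c) (extN N c') := by
    intro c hc c' hc' hne
    rw [Finset.disjoint_left]
    intro l hl hl'
    rw [mem_extN (hN c hc)] at hl
    rw [mem_extN (hN c' hc')] at hl'
    rcases List.prefix_or_prefix_of_prefix hl.2 hl'.2 with h | h
    · exact hne (hpc c hc c' hc' h)
    · exact hne ((hpc c' hc' c hc h).symm)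
  have hcover : C.biUnion (extN N) = allN N := by
    apply Finset.Subset.antisymm
    · intro l hl
      rw [Finset.mem_biUnion] at hl
      obtain ⟨c, hc, hl⟩ := hl
      exact mem_allN.2 ((mem_extN (hN c hc)).1 hl).1
    · intro l hl
      obtain ⟨c, hc, hcl⟩ := hbN l (mem_allN.1 hl)
      exact Finset.mem_biUnion.2 ⟨c, hc, (mem_extN (hN c hc)).2 ⟨mem_allN.1 hl, hcl⟩⟩
  calc ∑ c ∈ C, Fintype.card A ^ (N - c.length) = ∑ c ∈ C, (extN N c).card := by
        simp [card_extN]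
    _ = (C.biUnion (extN N)).card := (Finset.card_biUnion hdisj).symm
    _ = Fintype.card A ^ N := by rw [hcover, card_allN]

theorem natsum_ge {C : Finset (List A)} {N : ℕ}
    (hN : ∀ c ∈ C, c.length ≤ N)
    (hbN : ∀ l : List A, l.length = N → ∃ c ∈ C, c <+: l) :
    Fintype.card A ^ N ≤ ∑ c ∈ C, Fintype.card A ^ (N - c.length) := by
  have hcover : allN N ⊆ C.biUnion (extN N) := by
    intro l hl
    obtain ⟨c, hc, hcl⟩ := hbN l (mem_allN.1 hl)
    exact Finset.mem_biUnion.2 ⟨c, hc, (mem_extN (hN c hc)).2 ⟨mem_allN.1 hl, hcl⟩⟩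
  calc Fintype.card A ^ N = (allN (A := A) N).card := (card_allN N).symm
    _ ≤ (C.biUnion (extN N)).card := Finset.card_le_card hcover
    _ ≤ ∑ c ∈ C, (extN N c).card := Finset.card_biUnion_le
    _ = ∑ c ∈ C, Fintype.card A ^ (N - c.length) := by simp [card_extN]

theorem kraft_mul [Nonempty A] {C : Finset (List A)} {N : ℕ}
    (hN : ∀ c ∈ C, c.length ≤ N) :
    (∑ c ∈ C, ((1 : ℝ) / Fintype.card A) ^ c.length) * (Fintype.card A : ℝ) ^ N =
      ((∑ c ∈ C, Fintype.card A ^ (N - c.length) : ℕ) : ℝ) := by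
  have hq : (0 : ℝ) < Fintype.card A := by
    exact_mod_cast Fintype.card_pos
  push_cast
  rw [Finset.sum_mul]
  refine Finset.sum_congr rfl fun c hc => ?_
  have he : (Fintype.card A : ℝ) ^ N =
      (Fintype.card A : ℝ) ^ c.length * (Fintype.card A : ℝ) ^ (N - c.length) := by
    rw [← pow_add]
    congr 1
    have := hN c hc
    omega
  rw [he, one_div, inv_pow, ← mul_assoc, inv_mul_cancel₀ (pow_ne_zero _ hq.ne'), one_mul]

theorem kraft_eq_one [Nonempty A] {C : Finset (List A)}
    (hpc : IsPrefixCode (↑C : Set (List A)))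
    (hb : ∀ y : ℕ → A, ∃ c ∈ C, PrefixOfPlay c y) :
    ∑ c ∈ C, ((1 : ℝ) / Fintype.card A) ^ c.length = 1 := by
  have hq : (0 : ℝ) < Fintype.card A := by exact_mod_cast Fintype.card_pos
  set N := C.sup List.length with hNdef
  have hN : ∀ c ∈ C, c.length ≤ N := fun c hc => Finset.le_sup (f := List.length) hc
  have hbN : ∀ l : List A, l.length = N → ∃ c ∈ C, c <+: l := fun l hl =>
    barrierN_of_barrier hb l (fun c hc => hl ▸ hN c hc)
  have h1 := kraft_mul hN
  rw [natsum_eq hpc hN hbN] at h1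
  have hne : ((Fintype.card A : ℝ)) ^ N ≠ 0 := pow_ne_zero _ hq.ne'
  push_cast at h1
  exact mul_right_cancel₀ hne (by rw [h1, one_mul])

theorem prefixCode_of_kraft [Nonempty A] {C : Finset (List A)}
    (hk : ∑ c ∈ C, ((1 : ℝ) / Fintype.card A) ^ c.length = 1)
    (hb : ∀ y : ℕ → A, ∃ c ∈ C, PrefixOfPlay c y) :
    IsPrefixCode (↑C : Set (List A)) := by
  have hq : (0 : ℝ) < Fintype.card A := by exact_mod_cast Fintype.card_pos
  intro c₀ hc₀ c₁ hc₁ hpre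
  by_contra hne
  rw [Finset.mem_coe] at hc₀ hc₁
  set C' := C.erase c₁ with hC'
  have hc₀' : c₀ ∈ C' := Finset.mem_erase.2 ⟨hne, hc₀⟩
  have hb' : ∀ y : ℕ → A, ∃ c ∈ C', PrefixOfPlay c y := by
    intro y
    obtain ⟨c, hc, hcy⟩ := hb y
    by_cases hcc : c = c₁
    · subst hcc
      refine ⟨c₀, hc₀', ?_⟩
      have : c₀ <+: List.ofFn (fun i : Fin c.length => y i) := by
        rw [PrefixOfPlay] at hcy
        rw [hcy]
        exact hpre
      exact prefixOfPlay_of_prefix_ofFn this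
    · exact ⟨c, Finset.mem_erase.2 ⟨hcc, hc⟩, hcy⟩
  set N := C.sup List.length with hNdef
  have hN' : ∀ c ∈ C', c.length ≤ N := fun c hc =>
    Finset.le_sup (f := List.length) (Finset.mem_of_mem_erase hc)
  have hbN' : ∀ l : List A, l.length = N → ∃ c ∈ C', c <+: l := fun l hl =>
    barrierN_of_barrier hb' l (fun c hc => hl ▸ hN' c hc)
  have hge := natsum_ge hN' hbN'
  have h1 := kraft_mul hN'
  have hS' : (1 : ℝ) ≤ ∑ c ∈ C', ((1 : ℝ) / Fintype.card A) ^ c.length := by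
    have hpow : (0 : ℝ) < (Fintype.card A : ℝ) ^ N := pow_pos hq N
    rw [← mul_le_mul_iff_left₀ hpow, one_mul, h1]
    exact_mod_cast hge
  have hsplit : (∑ c ∈ C', ((1 : ℝ) / Fintype.card A) ^ c.length) +
      ((1 : ℝ) / Fintype.card A) ^ c₁.length = 1 := by
    have h2 := Finset.sum_erase_add C
      (fun c => ((1 : ℝ) / Fintype.card A) ^ c.length) hc₁
    rw [hk] at h2
    exact h2
  have hpos : (0 : ℝ) < ((1 : ℝ) / Fintype.card A) ^ c₁.length :=
    pow_pos (by positivity) _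
  linarith

end Kraft

/-- `C` is a maximal prefix code iff `Z_{s₁}(C)` is minimal-size and `s₁` is a winning
strategy for Player 1 in the game with winning set determined by `Z_{s₁}(C)`. -/
theorem isMaximalPrefixCode_iff_winning [Fintype A] [Nonempty A] [DecidableEq A]
    (s₁ : List A → A) (C : Finset (List A)) :
    IsMaximalPrefixCode (↑C : Set (List A)) ↔
      (∑ p ∈ C.image (fun c => interleave s₁ [] c),
          ((1 : ℝ) / Fintype.card A) ^ (p.length / 2) = 1 ∧
       ∀ x : ℕ → A, Consistent1 s₁ x →
         ∃ p ∈ (↑(C.image fun c => interleave s₁ [] c) : Set (List A)),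
           PrefixOfPlay p x) := by
  have himg : ∑ p ∈ C.image (fun c => interleave s₁ [] c),
      ((1 : ℝ) / Fintype.card A) ^ (p.length / 2) =
      ∑ c ∈ C, ((1 : ℝ) / Fintype.card A) ^ c.length := by
    rw [Finset.sum_image (fun c _ c' _ h => interleave_injOn s₁ c c' [] h)]
    refine Finset.sum_congr rfl fun c hc => ?_
    rw [interleave_length]
    congr 1
    omega
  rw [himg, winning_iff_barrier]
  constructor
  · intro hm
    exact ⟨kraft_eq_one hm.1 (barrier_of_maximal hm), barrier_of_maximal hm⟩
  · rintro ⟨hk, hb⟩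
    exact maximal_of_prefixCode_barrier (prefixCode_of_kraft hk hb) hb
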